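/- Let V be a nonempty type of propositional variables with decidable equality, let φ = [C₁, …, C_m] be a 3CNF formula (a list of m clauses, each clause a finite set of exactly three literals over V), let α : V → Bool be an assignment, and let k ≤ m. Then the number of indices i with α satisfying C_i is at least k if and only if there exists a formula φ' obtained from φ by adding at most m − k literals to its clauses such that α satisfies every clause of φ'. -/

import Mathlib

/-- A clause (a finite set of literals `(v, s)`) is satisfied by an assignment `α`
iff it contains a literal `(v, s)` with `α v = s`. -/
def ClauseSat {V : Type*} (α : V → Bool) (C : Finset (V × Bool)) : Prop :=
  ∃ l ∈ C, α l.1 = l.2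

instance {V : Type*} (α : V → Bool) (C : Finset (V × Bool)) :
    Decidable (ClauseSat α C) := by
  unfold ClauseSat; infer_instance

/-- `AddedAtMost φ φ' t`: the formula `φ'` is obtained from the formula `φ` by adding
at most `t` literals to its clauses: both are lists of clauses of the same length,
each clause of `φ` is a subset of the corresponding clause of `φ'`, and the total
number of added literals is at most `t`. -/
def AddedAtMost {V : Type*} [DecidableEq V]
    (φ φ' : List (Finset (V × Bool))) (t : ℕ) : Prop :=
  List.Forall₂ (· ⊆ ·) φ φ' ∧
  (((φ.zip φ').map (fun p => p.2.card - p.1.card)).sum ≤ t)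

/-- Correctness of the reduction from Max-3SAT to the Formula Change Problem:
for a 3CNF formula `φ` with `m` clauses, an assignment `α`, and `k ≤ m`,
`α` satisfies at least `k` clauses of `φ` iff `φ` can be changed, by adding at most
`m − k` literals to its clauses, into a formula all of whose clauses `α` satisfies. -/
lemma auxA {V : Type*} [DecidableEq V] (α : V → Bool) :
    ∀ (φ φ' : List (Finset (V × Bool))), List.Forall₂ (· ⊆ ·) φ φ' →
    (∀ C ∈ φ', ClauseSat α C) →
    φ.countP (fun C => !decide (ClauseSat α C)) ≤
      ((φ.zip φ').map (fun p => p.2.card - p.1.card)).sum := by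
  intro φ φ' h hsat
  induction h with
  | nil => simp
  | @cons C C' l l' hCC' _ ih =>
    have ihl := ih (fun D hD => hsat D (List.mem_cons_of_mem _ hD))
    rw [List.countP_cons]
    simp only [List.zip_cons_cons, List.map_cons, List.sum_cons]
    by_cases hC : ClauseSat α C
    · simp [hC]
      omega
    · have hne : C ≠ C' := by
        rintro rfl; exact hC (hsat C List.mem_cons_self)
      have hlt : C.card < C'.card := Finset.card_lt_card (lt_of_le_of_ne hCC' hne)
      simp [hC]
      omega

lemma auxB {V : Type*} [Nonempty V] [DecidableEq V] (α : V → Bool) :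
    ∀ (φ : List (Finset (V × Bool))) (t : ℕ),
    φ.countP (fun C => !decide (ClauseSat α C)) ≤ t →
    ∃ φ', List.Forall₂ (· ⊆ ·) φ φ' ∧
      ((φ.zip φ').map (fun p => p.2.card - p.1.card)).sum ≤ t ∧
      ∀ C ∈ φ', ClauseSat α C := by
  intro φ
  induction φ with
  | nil => intro t _; exact ⟨[], List.Forall₂.nil, by simp, by simp⟩
  | cons C l ih =>
    intro t ht
    rw [List.countP_cons] at ht
    by_cases hC : ClauseSat α C
    · obtain ⟨φ', h1, h2, h3⟩ := ih t (by simp [hC] at ht ⊢; omega)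
      refine ⟨C :: φ', List.Forall₂.cons (le_refl _) h1, ?_, ?_⟩
      · simpa using h2
      · intro D hD
        rw [List.mem_cons] at hD
        rcases hD with rfl | hD
        · exact hC
        · exact h3 D hD
    · obtain ⟨v⟩ := ‹Nonempty V›
      simp only [hC, decide_false, Bool.not_false, if_true] at ht
      obtain ⟨φ', h1, h2, h3⟩ := ih (t - 1) (by omega)
      refine ⟨insert (v, α v) C :: φ', List.Forall₂.cons (Finset.subset_insert _ _) h1, ?_, ?_⟩
      · simp only [List.zip_cons_cons, List.map_cons, List.sum_cons]
        have := Finset.card_insert_le (v, α v) C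
        omega
      · intro D hD
        rw [List.mem_cons] at hD
        rcases hD with rfl | hD
        · exact ⟨(v, α v), Finset.mem_insert_self _ _, rfl⟩
        · exact h3 D hD

theorem max3sat_iff_formula_change
    {V : Type*} [Nonempty V] [DecidableEq V]
    (φ : List (Finset (V × Bool))) (h3 : ∀ C ∈ φ, C.card = 3)
    (α : V → Bool) (k : ℕ) (hk : k ≤ φ.length) :
    k ≤ φ.countP (fun C => decide (ClauseSat α C)) ↔
    ∃ φ' : List (Finset (V × Bool)),
      AddedAtMost φ φ' (φ.length - k) ∧ ∀ C ∈ φ', ClauseSat α C := by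
  have hsum := List.length_eq_countP_add_countP (fun C => decide (ClauseSat α C)) (l := φ)
  have heq : φ.countP (fun a => decide ¬(decide (ClauseSat α a) = true)) =
      φ.countP (fun C => !decide (ClauseSat α C)) :=
    List.countP_congr (by intro a _; simp)
  rw [heq] at hsum
  constructor
  · intro h
    obtain ⟨φ', h1, h2, h3'⟩ := auxB α φ (φ.length - k) (by omega)
    exact ⟨φ', ⟨h1, h2⟩, h3'⟩
  · rintro ⟨φ', ⟨h1, h2⟩, h3'⟩
    have := auxA α φ φ' h1 h3'
    omega
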